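/- For every pattern σ ∈ S_k with k ≥ 1, every q > 0, and all positive integers m, n with m,n ≥ k, the avoidance probabilities under the Mallows(q) distribution satisfy the submultiplicativity inequality P_{m+n}(σ,q) ≤ P_m(σ,q) · P_n(σ,q). -/

import Mathlib

open scoped Classical

/-- The q-integer `[k]_q = 1 + q + ... + q^(k-1)`. -/
noncomputable def qint (q : ℝ) (k : ℕ) : ℝ := ∑ i ∈ Finset.range k, q ^ i

/-- The q-factorial `[n]_q! = [1]_q [2]_q ⋯ [n]_q`. -/
noncomputable def qfact (q : ℝ) (n : ℕ) : ℝ := ∏ i ∈ Finset.range n, qint q (i + 1)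

/-- The number of inversions of a permutation of `{0, ..., n-1}`. -/
def inversions {n : ℕ} (π : Equiv.Perm (Fin n)) : ℕ :=
  (Finset.univ.filter (fun p : Fin n × Fin n => p.1 < p.2 ∧ π p.2 < π p.1)).card

/-- The pattern `σ ∈ S_m` occurs consecutively in `π ∈ S_n` starting at (0-indexed) position `j`:
the window `π_j, ..., π_{j+m-1}` is order-isomorphic to `σ`. -/
def occursAt {m n : ℕ} (σ : Equiv.Perm (Fin m)) (π : Equiv.Perm (Fin n)) (j : ℕ) : Prop :=
  ∃ h : j + m ≤ n, ∀ a b : Fin m,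
    σ a < σ b ↔
      π ⟨j + (a : ℕ), lt_of_lt_of_le (Nat.add_lt_add_left a.isLt j) h⟩ <
      π ⟨j + (b : ℕ), lt_of_lt_of_le (Nat.add_lt_add_left b.isLt j) h⟩

/-- `π` avoids `σ` as a consecutive pattern. -/
def avoids {m n : ℕ} (σ : Equiv.Perm (Fin m)) (π : Equiv.Perm (Fin n)) : Prop :=
  ∀ j : ℕ, ¬ occursAt σ π j

/-- `P_n(σ, q)`: the probability that a Mallows(q) random permutation of length `n`
avoids `σ` as a consecutive pattern. -/
noncomputable def Pn (m : ℕ) (σ : Equiv.Perm (Fin m)) (q : ℝ) (n : ℕ) : ℝ :=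
  (∑ π ∈ Finset.univ.filter (fun π : Equiv.Perm (Fin n) => avoids σ π),
    q ^ inversions π) / qfact q n

namespace Sub

open Finset Equiv Fin

variable {m n : ℕ}

def crossInv {N : ℕ} (A : Finset (Fin N)) : ℕ :=
  (Finset.univ.filter (fun p : Fin N × Fin N => p.1 ∈ A ∧ p.2 ∉ A ∧ p.2 < p.1)).card

lemma compl_card (A : Finset (Fin (m + n))) (hA : A.card = m) : Aᶜ.card = n := by
  simp [Finset.card_compl, hA]

noncomputable def assemble (α : Equiv.Perm (Fin m)) (β : Equiv.Perm (Fin n))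
    (A : Finset (Fin (m + n))) (hA : A.card = m) : Equiv.Perm (Fin (m + n)) :=
  (finSumFinEquiv.symm.trans (Equiv.sumCongr (α : Equiv.Perm (Fin m)) β)).trans
    ((Equiv.sumCongr (A.orderIsoOfFin hA).toEquiv
      ((Aᶜ.orderIsoOfFin (compl_card A hA)).toEquiv.trans
        (Equiv.subtypeEquivRight (fun _ => Finset.mem_compl)))).trans
      (Equiv.sumCompl (· ∈ A)))

section Assemble

variable (α : Equiv.Perm (Fin m)) (β : Equiv.Perm (Fin n))
    (A : Finset (Fin (m + n))) (hA : A.card = m)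

lemma assemble_castAdd (i : Fin m) :
    assemble α β A hA (Fin.castAdd n i) = (A.orderIsoOfFin hA (α i) : Fin (m + n)) := by
  simp [assemble, finSumFinEquiv_symm_apply_castAdd]

lemma assemble_natAdd (j : Fin n) :
    assemble α β A hA (Fin.natAdd m j) = (Aᶜ.orderIsoOfFin (compl_card A hA) (β j) : Fin (m + n)) := by
  simp [assemble, finSumFinEquiv_symm_apply_natAdd]

lemma assemble_top_mem (i : Fin m) : assemble α β A hA (Fin.castAdd n i) ∈ A := by
  rw [assemble_castAdd]; exact Finset.coe_mem _

lemma assemble_bot_not_mem (j : Fin n) : assemble α β A hA (Fin.natAdd m j) ∉ A := by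
  rw [assemble_natAdd]
  exact Finset.mem_compl.mp (Finset.coe_mem _)

lemma assemble_lt_top (i j : Fin m) :
    assemble α β A hA (Fin.castAdd n i) < assemble α β A hA (Fin.castAdd n j) ↔ α i < α j := by
  rw [assemble_castAdd, assemble_castAdd, Subtype.coe_lt_coe, OrderIso.lt_iff_lt]

lemma assemble_lt_bot (i j : Fin n) :
    assemble α β A hA (Fin.natAdd m i) < assemble α β A hA (Fin.natAdd m j) ↔ β i < β j := by
  rw [assemble_natAdd, assemble_natAdd, Subtype.coe_lt_coe, OrderIso.lt_iff_lt]

lemma castAdd_lt_natAdd (i : Fin m) (j : Fin n) : Fin.castAdd n i < Fin.natAdd m j := by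
  simp only [Fin.lt_def, Fin.coe_castAdd, Fin.coe_natAdd]
  omega

lemma not_natAdd_lt_castAdd (a : Fin n) (b : Fin m) : ¬ (Fin.natAdd m a < Fin.castAdd n b) := by
  simp only [Fin.lt_def, Fin.coe_castAdd, Fin.coe_natAdd]
  omega

lemma castAdd_lt_castAdd {a b : Fin m} : Fin.castAdd n a < Fin.castAdd n b ↔ a < b := by
  simp only [Fin.lt_def, Fin.coe_castAdd]

lemma natAdd_lt_natAdd {a b : Fin n} : Fin.natAdd m a < Fin.natAdd m b ↔ a < b := by
  simp only [Fin.lt_def, Fin.coe_natAdd]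
  omega

lemma inversions_eq_sum {N : ℕ} (π : Equiv.Perm (Fin N)) :
    inversions π = ∑ x : Fin N × Fin N, if x.1 < x.2 ∧ π x.2 < π x.1 then 1 else 0 := by
  rw [inversions, Finset.card_filter]

lemma crossInv_eq_sum {N : ℕ} (A : Finset (Fin N)) :
    crossInv A = ∑ x : Fin N × Fin N, if x.1 ∈ A ∧ x.2 ∉ A ∧ x.2 < x.1 then 1 else 0 := by
  rw [crossInv, Finset.card_filter]

lemma crossInv_assemble :
    crossInv A = ∑ a : Fin m, ∑ b : Fin n,
      if assemble α β A hA (Fin.natAdd m b) < assemble α β A hA (Fin.castAdd n a) then 1 else 0 := by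
  rw [crossInv_eq_sum]
  rw [← Equiv.sum_comp (Equiv.prodCongr (finSumFinEquiv.trans (assemble α β A hA : Fin (m+n) ≃ Fin (m+n)))
    (finSumFinEquiv.trans (assemble α β A hA : Fin (m+n) ≃ Fin (m+n))))]
  simp only [Equiv.prodCongr_apply, Equiv.trans_apply, Prod.map, Fintype.sum_prod_type,
    Fintype.sum_sum_type, finSumFinEquiv_apply_left, finSumFinEquiv_apply_right]

  simp only [assemble_top_mem α β A hA, assemble_bot_not_mem α β A hA, true_and, false_and,
    if_false, not_true_eq_false, not_false_eq_true, Finset.sum_const_zero, add_zero, zero_add,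
    and_false]

lemma inversions_assemble :
    inversions (assemble α β A hA) = inversions α + inversions β + crossInv A := by
  rw [inversions_eq_sum (assemble α β A hA)]
  rw [← Equiv.sum_comp (Equiv.prodCongr finSumFinEquiv finSumFinEquiv)]
  simp only [Equiv.prodCongr_apply, Prod.map, Fintype.sum_prod_type, Fintype.sum_sum_type,
    finSumFinEquiv_apply_left, finSumFinEquiv_apply_right, Finset.sum_add_distrib]
  simp only [castAdd_lt_castAdd, natAdd_lt_natAdd, assemble_lt_top α β A hA,
    assemble_lt_bot α β A hA, castAdd_lt_natAdd, not_natAdd_lt_castAdd, true_and, false_and,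
    if_false, Finset.sum_const_zero, add_zero, zero_add, if_true]
  rw [inversions_eq_sum α, inversions_eq_sum β, crossInv_assemble α β A hA,
    Fintype.sum_prod_type, Fintype.sum_prod_type]
  ring

end Assemble

lemma castAdd_inj : Function.Injective (Fin.castAdd n : Fin m → Fin (m + n)) := by
  intro a b h
  simpa [Fin.ext_iff] using h

noncomputable def firstSet (π : Equiv.Perm (Fin (m + n))) : Finset (Fin (m + n)) :=
  Finset.univ.image (fun i : Fin m => π (Fin.castAdd n i))

lemma firstSet_card (π : Equiv.Perm (Fin (m + n))) : (firstSet π).card = m := by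
  rw [firstSet, Finset.card_image_of_injective _
    (show Function.Injective (fun i : Fin m => π (Fin.castAdd n i)) from
      fun a b hab => castAdd_inj (π.injective hab))]
  simp

lemma mem_firstSet (π : Equiv.Perm (Fin (m + n))) (i : Fin m) :
    π (Fin.castAdd n i) ∈ firstSet π :=
  Finset.mem_image_of_mem _ (Finset.mem_univ i)

lemma not_mem_firstSet (π : Equiv.Perm (Fin (m + n))) (j : Fin n) :
    π (Fin.natAdd m j) ∉ firstSet π := by
  intro h
  obtain ⟨i, -, hi⟩ := Finset.mem_image.mp h
  have := π.injective hi
  have h1 : (i : ℕ) = m + (j : ℕ) := congrArg Fin.val this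
  have := i.isLt
  omega

noncomputable def topStd (π : Equiv.Perm (Fin (m + n))) : Equiv.Perm (Fin m) :=
  Equiv.ofBijective
    (fun i => ((firstSet π).orderIsoOfFin (firstSet_card π)).symm
      ⟨π (Fin.castAdd n i), mem_firstSet π i⟩)
    (Finite.injective_iff_bijective.mp (by
      intro a b h
      have h2 := congrArg (((firstSet π).orderIsoOfFin (firstSet_card π)) ·) h
      simp only [OrderIso.apply_symm_apply] at h2
      exact castAdd_inj (π.injective (congrArg Subtype.val h2))))

noncomputable def botStd (π : Equiv.Perm (Fin (m + n))) : Equiv.Perm (Fin n) :=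
  Equiv.ofBijective
    (fun j => ((firstSet π)ᶜ.orderIsoOfFin (compl_card _ (firstSet_card π))).symm
      ⟨π (Fin.natAdd m j), Finset.mem_compl.mpr (not_mem_firstSet π j)⟩)
    (Finite.injective_iff_bijective.mp (by
      intro a b h
      have h2 := congrArg ((((firstSet π)ᶜ).orderIsoOfFin (compl_card _ (firstSet_card π))) ·) h
      simp only [OrderIso.apply_symm_apply] at h2
      have h3 := π.injective (congrArg Subtype.val h2)
      have h4 : m + (a : ℕ) = m + (b : ℕ) := congrArg Fin.val h3
      exact Fin.ext (by omega)))

lemma topStd_lt_iff (π : Equiv.Perm (Fin (m + n))) (a b : Fin m) :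
    topStd π a < topStd π b ↔ π (Fin.castAdd n a) < π (Fin.castAdd n b) := by
  have h1 : ∀ c : Fin m, topStd π c = ((firstSet π).orderIsoOfFin (firstSet_card π)).symm
      ⟨π (Fin.castAdd n c), mem_firstSet π c⟩ := fun _ => rfl
  rw [h1, h1, OrderIso.lt_iff_lt, Subtype.mk_lt_mk]

lemma botStd_lt_iff (π : Equiv.Perm (Fin (m + n))) (a b : Fin n) :
    botStd (m := m) π a < botStd (m := m) π b ↔ π (Fin.natAdd m a) < π (Fin.natAdd m b) := by
  have h1 : ∀ c : Fin n, botStd (m := m) π c = ((firstSet π)ᶜ.orderIsoOfFin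
      (compl_card _ (firstSet_card π))).symm
      ⟨π (Fin.natAdd m c), Finset.mem_compl.mpr (not_mem_firstSet π c)⟩ := fun _ => rfl
  rw [h1, h1, OrderIso.lt_iff_lt, Subtype.mk_lt_mk]

lemma perm_eq_of_lt_iff (γ δ : Equiv.Perm (Fin m)) (h : ∀ a b, γ a < γ b ↔ δ a < δ b) :
    γ = δ := by
  have hsm : StrictMono (fun x => γ (δ.symm x)) := by
    intro x y hxy
    exact (h _ _).mpr (by simpa using hxy)
  have hid : StrictMono (id : Fin m → Fin m) := strictMono_id
  have hr : Set.range (fun x => γ (δ.symm x)) = Set.range (id : Fin m → Fin m) := by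
    rw [Set.range_id]
    apply Set.eq_univ_of_forall
    intro y
    exact ⟨δ (γ.symm y), by simp⟩
  have heq := (hsm.range_inj hid).mp hr
  apply Equiv.ext
  intro x
  have := congrFun heq (δ x)
  simpa using this

section Assemble2

variable (α : Equiv.Perm (Fin m)) (β : Equiv.Perm (Fin n))
    (A : Finset (Fin (m + n))) (hA : A.card = m)

lemma topStd_assemble : topStd (assemble α β A hA) = α := by
  apply perm_eq_of_lt_iff
  intro a b
  rw [topStd_lt_iff, assemble_lt_top]

lemma botStd_assemble : botStd (m := m) (assemble α β A hA) = β := by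
  apply perm_eq_of_lt_iff
  intro a b
  rw [botStd_lt_iff, assemble_lt_bot]

lemma firstSet_assemble : firstSet (assemble α β A hA) = A := by
  apply Finset.eq_of_subset_of_card_le
  · intro x hx
    obtain ⟨i, -, hi⟩ := Finset.mem_image.mp hx
    exact hi ▸ assemble_top_mem α β A hA i
  · rw [hA, firstSet_card]

lemma assemble_std (π : Equiv.Perm (Fin (m + n))) :
    assemble (topStd π) (botStd (m := m) π) (firstSet π) (firstSet_card π) = π := by
  apply Equiv.ext
  intro x
  refine Fin.addCases (fun i => ?_) (fun j => ?_) x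
  · rw [assemble_castAdd]
    have h1 : topStd π i = ((firstSet π).orderIsoOfFin (firstSet_card π)).symm
        ⟨π (Fin.castAdd n i), mem_firstSet π i⟩ := rfl
    rw [h1, OrderIso.apply_symm_apply]
  · rw [assemble_natAdd]
    have h1 : botStd (m := m) π j = ((firstSet π)ᶜ.orderIsoOfFin (compl_card _ (firstSet_card π))).symm
        ⟨π (Fin.natAdd m j), Finset.mem_compl.mpr (not_mem_firstSet π j)⟩ := rfl
    rw [h1, OrderIso.apply_symm_apply]

end Assemble2

noncomputable def Cq (q : ℝ) (m n : ℕ) : ℝ :=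
  ∑ A ∈ Finset.powersetCard m (Finset.univ : Finset (Fin (m + n))), q ^ crossInv A

lemma master (q : ℝ) (P1 : Equiv.Perm (Fin m) → Prop) (P2 : Equiv.Perm (Fin n) → Prop) :
    ∑ π ∈ Finset.univ.filter (fun π : Equiv.Perm (Fin (m + n)) =>
        P1 (topStd π) ∧ P2 (botStd (m := m) π)), q ^ inversions π
    = (∑ a ∈ Finset.univ.filter P1, q ^ inversions a)
      * (∑ b ∈ Finset.univ.filter P2, q ^ inversions b) * Cq q m n := by
  classical
  have step1 : ∑ π ∈ Finset.univ.filter (fun π : Equiv.Perm (Fin (m + n)) =>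
        P1 (topStd π) ∧ P2 (botStd (m := m) π)), q ^ inversions π
      = ∑ x ∈ ((Finset.univ.filter P1) ×ˢ (Finset.univ.filter P2)) ×ˢ
          Finset.powersetCard m (Finset.univ : Finset (Fin (m + n))),
          q ^ (inversions x.1.1 + inversions x.1.2 + crossInv x.2) := by
    refine (Finset.sum_bij
      (fun x hx => assemble x.1.1 x.1.2 x.2
        (Finset.mem_powersetCard_univ.mp (Finset.mem_product.mp hx).2))
      ?_ ?_ ?_ ?_).symm
    · intro x hx
      obtain ⟨hx1, hx2⟩ := Finset.mem_product.mp hx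
      obtain ⟨hxa, hxb⟩ := Finset.mem_product.mp hx1
      rw [Finset.mem_filter] at hxa hxb
      rw [Finset.mem_filter]
      refine ⟨Finset.mem_univ _, ?_, ?_⟩
      · rw [topStd_assemble]; exact hxa.2
      · rw [botStd_assemble]; exact hxb.2
    · intro x hx y hy hxy0
      have hxy : assemble x.1.1 x.1.2 x.2
            (Finset.mem_powersetCard_univ.mp (Finset.mem_product.mp hx).2)
          = assemble y.1.1 y.1.2 y.2
            (Finset.mem_powersetCard_univ.mp (Finset.mem_product.mp hy).2) := hxy0
      have hA : x.2 = y.2 := by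
        rw [← firstSet_assemble x.1.1 x.1.2 x.2
          (Finset.mem_powersetCard_univ.mp (Finset.mem_product.mp hx).2), hxy,
          firstSet_assemble]
      have hα : x.1.1 = y.1.1 := by
        rw [← topStd_assemble x.1.1 x.1.2 x.2
          (Finset.mem_powersetCard_univ.mp (Finset.mem_product.mp hx).2), hxy,
          topStd_assemble]
      have hβ : x.1.2 = y.1.2 := by
        rw [← botStd_assemble x.1.1 x.1.2 x.2
          (Finset.mem_powersetCard_univ.mp (Finset.mem_product.mp hx).2), hxy,
          botStd_assemble]
      exact Prod.ext (Prod.ext hα hβ) hA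
    · intro π hπ
      rw [Finset.mem_filter] at hπ
      refine ⟨((topStd π, botStd (m := m) π), firstSet π), ?_, ?_⟩
      · refine Finset.mem_product.mpr ⟨Finset.mem_product.mpr ⟨?_, ?_⟩, ?_⟩
        · exact Finset.mem_filter.mpr ⟨Finset.mem_univ _, hπ.2.1⟩
        · exact Finset.mem_filter.mpr ⟨Finset.mem_univ _, hπ.2.2⟩
        · exact Finset.mem_powersetCard_univ.mpr (firstSet_card π)
      · exact assemble_std π
    · intro x hx
      rw [inversions_assemble]
  rw [step1, Finset.sum_product, Finset.sum_product, Cq, Finset.sum_mul_sum, Finset.sum_mul]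
  apply Finset.sum_congr rfl
  intro a _
  rw [Finset.sum_mul]
  apply Finset.sum_congr rfl
  intro b _
  rw [Finset.mul_sum]
  apply Finset.sum_congr rfl
  intro A _
  rw [pow_add, pow_add]

lemma crossInv_compl_singleton {N : ℕ} (b : Fin (N + 1)) :
    crossInv ({b}ᶜ : Finset (Fin (N + 1))) = N - (b : ℕ) := by
  rw [crossInv]
  have h : (Finset.univ.filter (fun p : Fin (N+1) × Fin (N+1) =>
      p.1 ∈ ({b}ᶜ : Finset (Fin (N+1))) ∧ p.2 ∉ ({b}ᶜ : Finset (Fin (N+1))) ∧ p.2 < p.1)).card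
      = (Finset.Ioi b).card := by
    refine Finset.card_bij' (fun p _ => p.1) (fun x _ => (x, b)) ?_ ?_ ?_ ?_
    · intro p hp
      simp only [Finset.mem_filter, Finset.mem_univ, true_and, Finset.mem_compl,
        Finset.mem_singleton, not_not] at hp
      rw [Finset.mem_Ioi]
      rw [hp.2.1] at hp
      exact hp.2.2
    · intro x hx
      rw [Finset.mem_Ioi] at hx
      refine Finset.mem_filter.mpr ⟨Finset.mem_univ _, ?_, ?_, ?_⟩
      · exact Finset.mem_compl.mpr (by simp [ne_of_gt hx])
      · simp
      · exact hx
    · intro p hp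
      simp only [Finset.mem_filter, Finset.mem_univ, true_and, Finset.mem_compl,
        Finset.mem_singleton, not_not] at hp
      exact Prod.ext rfl hp.2.1.symm
    · intro x _
      rfl
  rw [h, Fin.card_Ioi]
  omega

lemma Cq_N_one (q : ℝ) (N : ℕ) : Cq q N 1 = qint q (N + 1) := by
  rw [Cq]
  have h2 : ∑ A ∈ Finset.powersetCard N (Finset.univ : Finset (Fin (N + 1))), q ^ crossInv A
      = ∑ b : Fin (N + 1), q ^ (N - (b : ℕ)) := by
    refine (Finset.sum_bij (fun (b : Fin (N + 1)) _ => ({b}ᶜ : Finset (Fin (N + 1))))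
      ?_ ?_ ?_ ?_).symm
    · intro b _
      rw [Finset.mem_powersetCard_univ, Finset.card_compl]
      simp
    · intro b _ c _ h
      have h2 := congrArg (fun s : Finset (Fin (N + 1)) => sᶜ) h
      simpa using h2
    · intro A hA
      rw [Finset.mem_powersetCard_univ] at hA
      have hc : Aᶜ.card = 1 := by rw [Finset.card_compl, hA]; simp
      obtain ⟨b, hb⟩ := Finset.card_eq_one.mp hc
      refine ⟨b, Finset.mem_univ _, ?_⟩
      show ({b}ᶜ : Finset (Fin (N + 1))) = A
      rw [← hb, compl_compl]
    · intro b _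
      rw [crossInv_compl_singleton]
  rw [h2, Fin.sum_univ_eq_sum_range (fun i => q ^ (N - i)) (N + 1), qint,
    ← Finset.sum_range_reflect (fun i => q ^ i) (N + 1)]
  apply Finset.sum_congr rfl
  intro j hj
  congr 1

lemma sum_inversions (q : ℝ) : ∀ N : ℕ, ∑ π : Equiv.Perm (Fin N), q ^ inversions π = qfact q N := by
  intro N
  induction N with
  | zero =>
    have h0 : ∀ π : Equiv.Perm (Fin 0), inversions π = 0 := by
      intro π
      refine Nat.le_zero.mp ?_
      calc inversions π ≤ (Finset.univ : Finset (Fin 0 × Fin 0)).card :=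
            Finset.card_filter_le _ _
        _ = 0 := by simp
    rw [qfact]
    simp [h0, Fintype.card_perm]
  | succ N ih =>
    have hmm := master (m := N) (n := 1) q (fun _ => True) (fun _ => True)
    simp only [and_self, Finset.filter_true] at hmm
    have h1 : ∑ b : Equiv.Perm (Fin 1), q ^ inversions b = 1 := by
      have h0 : ∀ π : Equiv.Perm (Fin 1), inversions π = 0 := by
        intro π
        rw [inversions, Finset.card_eq_zero, Finset.filter_eq_empty_iff]
        intro p _
        rintro ⟨hlt, -⟩
        have h2 := Fin.lt_def.mp hlt
        have h3 := p.1.isLt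
        have h4 := p.2.isLt
        omega
      simp [h0, Fintype.card_perm]
    have hq : qfact q (N + 1) = qfact q N * qint q (N + 1) := by
      rw [qfact, qfact, Finset.prod_range_succ]
    rw [hmm, ih, h1, mul_one, Cq_N_one, hq]

section Transfer

variable {k : ℕ} (σ : Equiv.Perm (Fin k))

lemma avoids_topStd (π : Equiv.Perm (Fin (m + n))) (h : avoids σ π) :
    avoids σ (topStd π) := by
  intro j hj
  obtain ⟨hjk, hrel⟩ := hj
  have hjk2 : j + k ≤ m + n := by omega
  refine h j ⟨hjk2, ?_⟩
  intro a b
  rw [hrel a b]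
  exact topStd_lt_iff π ⟨j + (a : ℕ), by omega⟩ ⟨j + (b : ℕ), by omega⟩

lemma avoids_botStd (π : Equiv.Perm (Fin (m + n))) (h : avoids σ π) :
    avoids σ (botStd (m := m) π) := by
  intro j hj
  obtain ⟨hjk, hrel⟩ := hj
  have hjk2 : (m + j) + k ≤ m + n := by omega
  refine h (m + j) ⟨hjk2, ?_⟩
  intro a b
  rw [hrel a b, botStd_lt_iff]
  have e : ∀ c : Fin k, π (Fin.natAdd m (⟨j + (c : ℕ), by omega⟩ : Fin n))
      = π (⟨m + j + (c : ℕ), by omega⟩ : Fin (m + n)) := by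
    intro c
    congr 1
    apply Fin.ext
    show m + (j + (c : ℕ)) = m + j + (c : ℕ)
    omega
  rw [e a, e b]

end Transfer

lemma qfact_pos {q : ℝ} (hq : 0 < q) (N : ℕ) : 0 < qfact q N := by
  rw [qfact]
  apply Finset.prod_pos
  intro i _
  rw [qint]
  apply Finset.sum_pos
  · intro j _
    positivity
  · exact ⟨0, Finset.mem_range.mpr (Nat.succ_pos _)⟩

end Sub


theorem Pn_submultiplicative (k : ℕ) (hk : 1 ≤ k) (σ : Equiv.Perm (Fin k))
    (q : ℝ) (hq : 0 < q) (m n : ℕ) (hm : k ≤ m) (hn : k ≤ n) :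
    Pn k σ q (m + n) ≤ Pn k σ q m * Pn k σ q n := by
  classical
  have key := Sub.master (m := m) (n := n) q (fun a => avoids σ a) (fun b => avoids σ b)
  have hfact := Sub.master (m := m) (n := n) q (fun _ => True) (fun _ => True)
  simp only [and_self, Finset.filter_true] at hfact
  rw [Sub.sum_inversions q (m + n)] at hfact
  rw [Sub.sum_inversions q m, Sub.sum_inversions q n] at hfact
  -- hfact : qfact q (m + n) = qfact q m * qfact q n * Cq q m n
  have hfm := Sub.qfact_pos hq m
  have hfn := Sub.qfact_pos hq n
  have hfmn := Sub.qfact_pos hq (m + n)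
  have hC : 0 < Sub.Cq q m n := by
    have h2 : Sub.Cq q m n = qfact q (m + n) / (qfact q m * qfact q n) := by
      rw [hfact]
      field_simp
    rw [h2]
    exact div_pos hfmn (mul_pos hfm hfn)
  have hnum : (∑ π ∈ Finset.univ.filter
        (fun π : Equiv.Perm (Fin (m + n)) => avoids σ π), q ^ inversions π)
      ≤ ∑ π ∈ Finset.univ.filter (fun π : Equiv.Perm (Fin (m + n)) =>
          avoids σ (Sub.topStd π) ∧ avoids σ (Sub.botStd (m := m) π)), q ^ inversions π := by
    apply Finset.sum_le_sum_of_subset_of_nonneg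
    · intro π hπ
      rw [Finset.mem_filter] at hπ ⊢
      exact ⟨hπ.1, Sub.avoids_topStd σ π hπ.2, Sub.avoids_botStd σ π hπ.2⟩
    · intro π _ _
      positivity
  rw [key] at hnum
  rw [Pn, Pn, Pn]
  calc (∑ π ∈ Finset.univ.filter
          (fun π : Equiv.Perm (Fin (m + n)) => avoids σ π), q ^ inversions π) / qfact q (m + n)
      ≤ ((∑ a ∈ Finset.univ.filter (fun a : Equiv.Perm (Fin m) => avoids σ a), q ^ inversions a)
        * (∑ b ∈ Finset.univ.filter (fun b : Equiv.Perm (Fin n) => avoids σ b), q ^ inversions b)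
        * Sub.Cq q m n) / qfact q (m + n) := by
        gcongr
    _ = ((∑ a ∈ Finset.univ.filter (fun a : Equiv.Perm (Fin m) => avoids σ a), q ^ inversions a)
          / qfact q m)
        * ((∑ b ∈ Finset.univ.filter (fun b : Equiv.Perm (Fin n) => avoids σ b), q ^ inversions b)
          / qfact q n) := by
        rw [hfact]
        field_simp
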